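/- arXiv:1008.3237 — 2 statements merged into one kernel-verified Lean document; each statement's English description precedes it below -/
import Mathlib

section
/- Main theorem: Let C ⊂ P(B(K),B(H)) be an mcs-cone. For a Hermiticity-preserving map Φ : B(K) → B(H), the following are equivalent: (1) Φ ∈ C; (2) Ψ*∘Φ is completely positive on B(K) for all Ψ ∈ C°; (3) Φ∘Ψ* is completely positive on B(H) for all Ψ ∈ C°. -/
open Matrix BigOperators ComplexOrder
open scoped Kronecker ComplexConjugate

/-- Square complex matrices of size `d`, modeling `B(ℂ^d)`. -/
abbrev MatC (d : ℕ) := Matrix (Fin d) (Fin d) ℂ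

/-- Hilbert–Schmidt (trace) inner product `⟨A, B⟩ = Tr (A B*)`. -/
noncomputable def hsInner {ι : Type*} [Fintype ι] (A B : Matrix ι ι ℂ) : ℂ :=
  (A * Bᴴ).trace

/-- Inner product of linear maps: `⟨Φ, Ψ⟩ = Σ_{k,l} ⟨Φ f_{kl}, Ψ f_{kl}⟩`. -/
noncomputable def mapInner {a b : ℕ} (Φ Ψ : MatC a →ₗ[ℂ] MatC b) : ℂ :=
  ∑ k : Fin a, ∑ l : Fin a,
    hsInner (Φ (Matrix.single k l 1)) (Ψ (Matrix.single k l 1))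

/-- The adjoint map `Φ*` w.r.t. the trace inner products, satisfying
`⟨A, Φ B⟩ = ⟨Φ* A, B⟩`. -/
noncomputable def adjointMap {a b : ℕ} (Φ : MatC a →ₗ[ℂ] MatC b) : MatC b →ₗ[ℂ] MatC a where
  toFun A := Matrix.of fun k l => hsInner A (Φ (Matrix.single k l 1))
  map_add' := by
    intro A B; ext k l
    simp [hsInner, Matrix.add_mul]
  map_smul' := by
    intro c A; ext k l
    simp [hsInner, Matrix.smul_mul]

/-- The conjugation map `Ad_V : ρ ↦ V ρ V*`. -/
noncomputable def adMap {a b : ℕ} (V : Matrix (Fin b) (Fin a) ℂ) : MatC a →ₗ[ℂ] MatC b where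
  toFun ρ := V * ρ * Vᴴ
  map_add' := by intro ρ σ; simp [Matrix.mul_add, Matrix.add_mul]
  map_smul' := by intro c ρ; simp [Matrix.mul_smul, Matrix.smul_mul]

/-- The map `Φ ⊗ id_k` acting on `Matrix (Fin a × Fin k)`. -/
noncomputable def tensId {a b : ℕ} (Φ : MatC a →ₗ[ℂ] MatC b) (k : ℕ)
    (X : Matrix (Fin a × Fin k) (Fin a × Fin k) ℂ) :
    Matrix (Fin b × Fin k) (Fin b × Fin k) ℂ :=
  Matrix.of fun p q => Φ (Matrix.of fun i j => X (i, p.2) (j, q.2)) p.1 q.1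

/-- `Φ` is `k`-positive if `Φ ⊗ id_k` preserves positive semidefiniteness. -/
def IsKPositive {a b : ℕ} (Φ : MatC a →ₗ[ℂ] MatC b) (k : ℕ) : Prop :=
  ∀ X : Matrix (Fin a × Fin k) (Fin a × Fin k) ℂ, X.PosSemidef → (tensId Φ k X).PosSemidef

/-- `Φ` is completely positive if it is `k`-positive for all `k`. -/
def IsCompletelyPositive {a b : ℕ} (Φ : MatC a →ₗ[ℂ] MatC b) : Prop :=
  ∀ k : ℕ, IsKPositive Φ k

/-- Positive map: maps PSD matrices to PSD matrices. -/
def IsPosMap {a b : ℕ} (Φ : MatC a →ₗ[ℂ] MatC b) : Prop :=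
  ∀ X : MatC a, X.PosSemidef → (Φ X).PosSemidef

/-- Hermiticity-preserving map. -/
def HermPreserving {a b : ℕ} (Φ : MatC a →ₗ[ℂ] MatC b) : Prop :=
  ∀ X, Φ Xᴴ = (Φ X)ᴴ

/-- Choi–Jamiołkowski matrix `J(Φ) = Σ_{k,l} f_{kl} ⊗ Φ(f_{kl})`. -/
noncomputable def choi {a b : ℕ} (Φ : MatC a →ₗ[ℂ] MatC b) :
    Matrix (Fin a × Fin b) (Fin a × Fin b) ℂ :=
  ∑ k : Fin a, ∑ l : Fin a,
    (Matrix.single k l (1 : ℂ)) ⊗ₖ (Φ (Matrix.single k l 1))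

noncomputable instance instTopMaps {a b : ℕ} : TopologicalSpace (MatC a →ₗ[ℂ] MatC b) :=
  TopologicalSpace.induced (fun Φ => (Φ : MatC a → MatC b)) inferInstance

/-- A cone with a mapping cone symmetry (mcs-cone): a nonzero closed convex cone of
positive maps, stable under two-sided composition with completely positive maps. -/
def IsMcsCone {a b : ℕ} (C : Set (MatC a →ₗ[ℂ] MatC b)) : Prop :=
  (∃ Φ ∈ C, Φ ≠ 0) ∧ IsClosed C ∧
  (∀ Φ ∈ C, ∀ Ψ ∈ C, Φ + Ψ ∈ C) ∧
  (∀ Φ ∈ C, ∀ c : ℝ, 0 ≤ c → (c : ℂ) • Φ ∈ C) ∧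
  (∀ Φ ∈ C, IsPosMap Φ) ∧
  (∀ Φ ∈ C, ∀ Υ : MatC b →ₗ[ℂ] MatC b, IsCompletelyPositive Υ →
    ∀ Ω : MatC a →ₗ[ℂ] MatC a, IsCompletelyPositive Ω → Υ ∘ₗ Φ ∘ₗ Ω ∈ C)

/-- Dual cone inside Hermiticity-preserving maps. -/
def dualCone {a b : ℕ} (C : Set (MatC a →ₗ[ℂ] MatC b)) : Set (MatC a →ₗ[ℂ] MatC b) :=
  {Ψ | HermPreserving Ψ ∧ ∀ Φ ∈ C, 0 ≤ mapInner Ψ Φ}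


section Lemmas

variable {a b d : ℕ}

lemma hsInner_eq_sum {ι : Type*} [Fintype ι] (A B : Matrix ι ι ℂ) :
    hsInner A B = ∑ i, ∑ j, A i j * (starRingEnd ℂ) (B i j) := by
  simp [hsInner, Matrix.trace, Matrix.mul_apply, Matrix.conjTranspose_apply, Matrix.diag]

lemma hsInner_std (M : MatC d) (k l : Fin d) :
    hsInner M (Matrix.single k l 1) = M k l := by
  rw [hsInner_eq_sum]
  simp only [Matrix.single, Matrix.of_apply, apply_ite (starRingEnd ℂ), _root_.map_one,
    _root_.map_zero, mul_ite, mul_one, mul_zero, ite_and]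
  rw [Finset.sum_comm]
  simp

lemma hsInner_conj {ι : Type*} [Fintype ι] (A B : Matrix ι ι ℂ) :
    hsInner A B = (starRingEnd ℂ) (hsInner B A) := by
  simp_rw [hsInner_eq_sum, map_sum]
  congr 1; ext i; congr 1; ext j
  rw [RingHom.map_mul, Complex.conj_conj, mul_comm]

lemma hsInner_smul_right {ι : Type*} [Fintype ι] (A B : Matrix ι ι ℂ) (c : ℂ) :
    hsInner A (c • B) = (starRingEnd ℂ) c * hsInner A B := by
  simp [hsInner_eq_sum, Finset.mul_sum, Matrix.smul_apply, mul_comm, mul_left_comm]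

lemma hsInner_add_right {ι : Type*} [Fintype ι] (A B C : Matrix ι ι ℂ) :
    hsInner A (B + C) = hsInner A B + hsInner A C := by
  simp [hsInner_eq_sum, Matrix.add_apply, mul_add, Finset.sum_add_distrib]

lemma matrix_decomp (M : MatC d) :
    M = ∑ k : Fin d, ∑ l : Fin d, M k l • Matrix.single k l (1 : ℂ) := by
  simpa [Matrix.smul_single, smul_eq_mul, mul_one] using
    Matrix.matrix_eq_sum_single M

lemma adjointMap_apply (Ψ : MatC a →ₗ[ℂ] MatC b) (A : MatC b) (k l : Fin a) :
    adjointMap Ψ A k l = hsInner A (Ψ (Matrix.single k l 1)) := rfl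

lemma hsInner_zero_right {ι : Type*} [Fintype ι] (A : Matrix ι ι ℂ) :
    hsInner A 0 = 0 := by simp [hsInner_eq_sum]

lemma hsInner_sum_right {ι κ : Type*} [Fintype ι] (A : Matrix ι ι ℂ) (s : Finset κ)
    (F : κ → Matrix ι ι ℂ) :
    hsInner A (∑ i ∈ s, F i) = ∑ i ∈ s, hsInner A (F i) := by
  classical
  induction s using Finset.induction_on with
  | empty => simp [hsInner_zero_right]
  | insert _ _ h ih => rw [Finset.sum_insert h, Finset.sum_insert h, hsInner_add_right, ih]

/-- Key adjoint identity. -/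
lemma hsInner_adjoint (Ψ : MatC a →ₗ[ℂ] MatC b) (A : MatC b) (B : MatC a) :
    hsInner (adjointMap Ψ A) B = hsInner A (Ψ B) := by
  conv_rhs => rw [matrix_decomp B]
  simp only [map_sum, _root_.map_smul, hsInner_sum_right, hsInner_smul_right]
  rw [hsInner_eq_sum]
  refine Finset.sum_congr rfl fun k _ => Finset.sum_congr rfl fun l _ => ?_
  rw [adjointMap_apply, mul_comm]

end Lemmas
lemma hsInner_adjoint' {a b : ℕ} (Ψ : MatC a →ₗ[ℂ] MatC b) (A : MatC a) (B : MatC b) :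
    hsInner (Ψ A) B = hsInner A (adjointMap Ψ B) := by
  rw [hsInner_conj, ← hsInner_adjoint, ← hsInner_conj]

lemma adjoint_adjoint {a b : ℕ} (Ψ : MatC a →ₗ[ℂ] MatC b) :
    adjointMap (adjointMap Ψ) = Ψ := by
  refine LinearMap.ext fun A => ?_
  ext k l
  rw [adjointMap_apply, ← hsInner_adjoint', hsInner_std]

lemma adjointMap_comp {a b c : ℕ} (Θ : MatC b →ₗ[ℂ] MatC c) (Γ : MatC a →ₗ[ℂ] MatC b) :
    adjointMap (Θ ∘ₗ Γ) = adjointMap Γ ∘ₗ adjointMap Θ := by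
  refine LinearMap.ext fun A => ?_
  ext k l
  rw [LinearMap.comp_apply, adjointMap_apply, adjointMap_apply, LinearMap.comp_apply,
    hsInner_adjoint]

lemma adMap_apply {a b : ℕ} (V : Matrix (Fin b) (Fin a) ℂ) (ρ : MatC a) :
    adMap V ρ = V * ρ * Vᴴ := rfl

lemma hsInner_conjugate {a b : ℕ} (V : Matrix (Fin b) (Fin a) ℂ) (A : MatC b) (M : MatC a) :
    hsInner A (V * M * Vᴴ) = hsInner (Vᴴ * A * V) M := by
  simp only [hsInner, Matrix.conjTranspose_mul, Matrix.conjTranspose_conjTranspose]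
  rw [show A * (V * (Mᴴ * Vᴴ)) = (A * V * Mᴴ) * Vᴴ by simp only [Matrix.mul_assoc],
    Matrix.trace_mul_cycle]
  simp only [Matrix.mul_assoc]

lemma adjointMap_adMap {a b : ℕ} (V : Matrix (Fin b) (Fin a) ℂ) :
    adjointMap (adMap V) = adMap Vᴴ := by
  refine LinearMap.ext fun A => ?_
  ext k l
  rw [adjointMap_apply, adMap_apply, hsInner_conjugate, hsInner_std, adMap_apply,
    Matrix.conjTranspose_conjTranspose]

/-- `sMap Θ = Σ_{k,l} Θ(f_{kl})_{kl}`, i.e. `⟨ω| J(Θ) |ω⟩`. -/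
noncomputable def sMap {d : ℕ} (Θ : MatC d →ₗ[ℂ] MatC d) : ℂ :=
  ∑ k : Fin d, ∑ l : Fin d, Θ (Matrix.single k l 1) k l

lemma apply_entry {a b : ℕ} (Θ : MatC a →ₗ[ℂ] MatC b) (M : MatC a) (i j : Fin b) :
    Θ M i j = ∑ k : Fin a, ∑ l : Fin a, M k l * Θ (Matrix.single k l 1) i j := by
  conv_lhs => rw [matrix_decomp M]
  simp only [map_sum, _root_.map_smul, Matrix.sum_apply, Matrix.smul_apply, smul_eq_mul]

lemma sMap_comm {d e : ℕ} (Θ : MatC e →ₗ[ℂ] MatC d) (Γ : MatC d →ₗ[ℂ] MatC e) :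
    sMap (Θ ∘ₗ Γ) = sMap (Γ ∘ₗ Θ) := by
  have key : ∀ {d e : ℕ} (Θ : MatC e →ₗ[ℂ] MatC d) (Γ : MatC d →ₗ[ℂ] MatC e),
      sMap (Θ ∘ₗ Γ) = ∑ p : (Fin d × Fin d) × (Fin e × Fin e),
        Γ (Matrix.single p.1.1 p.1.2 1) p.2.1 p.2.2 *
          Θ (Matrix.single p.2.1 p.2.2 1) p.1.1 p.1.2 := by
    intro d e Θ Γ
    rw [Fintype.sum_prod_type]
    simp only [Fintype.sum_prod_type, sMap, LinearMap.comp_apply]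
    exact Finset.sum_congr rfl fun k _ => Finset.sum_congr rfl fun l _ => apply_entry Θ _ _ _
  rw [key, key, ← Equiv.sum_comp (Equiv.prodComm _ _)]
  exact Finset.sum_congr rfl fun p _ => mul_comm _ _

lemma sMap_adjoint {d : ℕ} (Θ : MatC d →ₗ[ℂ] MatC d) :
    sMap (adjointMap Θ) = (starRingEnd ℂ) (sMap Θ) := by
  simp only [sMap, map_sum]
  refine Finset.sum_congr rfl fun k _ => Finset.sum_congr rfl fun l _ => ?_
  rw [adjointMap_apply, hsInner_conj, hsInner_std]

lemma mapInner_eq_sMap {a b : ℕ} (Ψ Φ : MatC a →ₗ[ℂ] MatC b) :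
    mapInner Ψ Φ = sMap (adjointMap Φ ∘ₗ Ψ) := by
  simp only [mapInner, sMap, LinearMap.comp_apply]
  refine Finset.sum_congr rfl fun k _ => Finset.sum_congr rfl fun l _ => ?_
  rw [← hsInner_std (adjointMap Φ (Ψ _)) k l, hsInner_adjoint]
lemma choi_apply {a b : ℕ} (Θ : MatC a →ₗ[ℂ] MatC b) (k l : Fin a) (i j : Fin b) :
    choi Θ (k, i) (l, j) = Θ (Matrix.single k l 1) i j := by
  simp only [choi, Matrix.sum_apply, Matrix.kroneckerMap_apply, Matrix.single,
    Matrix.of_apply, ite_mul, one_mul, zero_mul, ite_and]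
  rw [Finset.sum_comm]
  simp

lemma quad_choi {d : ℕ} (Θ : MatC d →ₗ[ℂ] MatC d) (x : Fin d × Fin d → ℂ) :
    dotProduct (star x) ((choi Θ).mulVec x)
      = sMap (adMap (Matrix.of fun i k => x (k, i))ᴴ ∘ₗ Θ) := by
  simp only [dotProduct, Matrix.mulVec, Pi.star_apply, Complex.star_def,
    Fintype.sum_prod_type, choi_apply, Finset.mul_sum, sMap, LinearMap.comp_apply,
    adMap_apply, Matrix.conjTranspose_conjTranspose, Matrix.mul_apply,
    Matrix.conjTranspose_apply, Matrix.of_apply, Finset.sum_mul]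
  refine Finset.sum_congr rfl fun k _ => ?_
  rw [Finset.sum_comm]
  refine Finset.sum_congr rfl fun l _ => ?_
  rw [Finset.sum_comm]
  refine Finset.sum_congr rfl fun i _ => Finset.sum_congr rfl fun j _ => ?_
  ring
lemma isHermitian_decomp {d : ℕ} {A : Matrix (Fin d) (Fin d) ℂ} (hA : A.IsHermitian) :
    ∃ P N : Matrix (Fin d) (Fin d) ℂ, P.PosSemidef ∧ N.PosSemidef ∧ A = P - N := by
  set U : Matrix (Fin d) (Fin d) ℂ := (hA.eigenvectorUnitary : Matrix (Fin d) (Fin d) ℂ)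
  refine ⟨U * Matrix.diagonal (fun i => ((max (hA.eigenvalues i) 0 : ℝ) : ℂ)) * Uᴴ,
    U * Matrix.diagonal (fun i => (((max (hA.eigenvalues i) 0 - hA.eigenvalues i : ℝ) : ℝ) : ℂ)) * Uᴴ,
    ?_, ?_, ?_⟩
  · exact (Matrix.PosSemidef.diagonal (fun i => by
      simpa using Complex.ofReal_nonneg.mpr (le_max_right _ _))).mul_mul_conjTranspose_same U
  · exact (Matrix.PosSemidef.diagonal (fun i => by
      simpa using Complex.ofReal_nonneg.mpr (by simp [le_max_left]))).mul_mul_conjTranspose_same U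
  · have hfun : (fun i => ((max (hA.eigenvalues i) 0 : ℝ) : ℂ)
        - (((max (hA.eigenvalues i) 0 - hA.eigenvalues i : ℝ) : ℝ) : ℂ))
        = RCLike.ofReal ∘ hA.eigenvalues := by
      funext i; simp only [Function.comp]; push_cast; ring_nf; rfl
    rw [← Matrix.sub_mul, ← Matrix.mul_sub, Matrix.diagonal_sub, hfun,
      ← Matrix.star_eq_conjTranspose]
    exact hA.spectral_theorem

lemma posMap_hermPreserving {a b : ℕ} {Φ : MatC a →ₗ[ℂ] MatC b} (h : IsPosMap Φ) :
    HermPreserving Φ := by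
  have hherm : ∀ A : MatC a, A.IsHermitian → (Φ A).IsHermitian := by
    intro A hA
    obtain ⟨P, N, hP, hN, rfl⟩ := isHermitian_decomp hA
    rw [map_sub]
    exact ((h P hP).1).sub ((h N hN).1)
  intro X
  have h1 : (X + Xᴴ).IsHermitian := by
    unfold Matrix.IsHermitian; rw [Matrix.conjTranspose_add, Matrix.conjTranspose_conjTranspose]; exact add_comm _ _
  have h2 : (Complex.I • (Xᴴ - X)).IsHermitian := by
    unfold Matrix.IsHermitian
    rw [Matrix.conjTranspose_smul, Matrix.conjTranspose_sub, Matrix.conjTranspose_conjTranspose,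
      Complex.star_def, Complex.conj_I, neg_smul, ← smul_neg, neg_sub]
  set M := X + Xᴴ with hM
  set N := Complex.I • (Xᴴ - X) with hN
  have hX : X = (1/2 : ℂ) • (M + Complex.I • N) := by
    rw [hN, smul_smul, Complex.I_mul_I, neg_one_smul, neg_sub, hM]
    module
  have hXh : Xᴴ = (1/2 : ℂ) • (M - Complex.I • N) := by
    rw [hN, smul_smul, Complex.I_mul_I, neg_one_smul, neg_sub, hM]
    module
  rw [hXh]
  conv_rhs => rw [hX, Φ.map_smul, map_add, Φ.map_smul]
  rw [Φ.map_smul, map_sub, Φ.map_smul]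
  rw [Matrix.conjTranspose_smul, Matrix.conjTranspose_add, Matrix.conjTranspose_smul,
    (hherm _ h1).eq, (hherm _ h2).eq]
  simp only [Complex.star_def, map_div₀, _root_.map_one, map_ofNat, Complex.conj_I, neg_smul,
    ← sub_eq_add_neg]
lemma stdBasis_conjTranspose {d : ℕ} (k l : Fin d) :
    (Matrix.single k l (1 : ℂ))ᴴ = Matrix.single l k 1 := by
  ext i j
  simp [Matrix.single, Matrix.conjTranspose_apply, and_comm, apply_ite (starRingEnd ℂ)]

lemma hsInner_conjTranspose {ι : Type*} [Fintype ι] (A B : Matrix ι ι ℂ) :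
    hsInner Aᴴ B = (starRingEnd ℂ) (hsInner A Bᴴ) := by
  simp only [hsInner_eq_sum, map_sum, _root_.map_mul, Matrix.conjTranspose_apply,
    Complex.conj_conj, Complex.star_def]
  rw [Finset.sum_comm]

lemma hermPreserving_adjoint {a b : ℕ} {Ψ : MatC a →ₗ[ℂ] MatC b} (h : HermPreserving Ψ) :
    HermPreserving (adjointMap Ψ) := by
  intro A
  ext k l
  rw [adjointMap_apply, Matrix.conjTranspose_apply, adjointMap_apply,
    show (Matrix.single k l 1 : MatC a) = (Matrix.single l k 1)ᴴ from
      (stdBasis_conjTranspose l k).symm, h, hsInner_conjTranspose,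
    Matrix.conjTranspose_conjTranspose]
  rfl

lemma hermPreserving_comp {a b c : ℕ} {Θ : MatC b →ₗ[ℂ] MatC c} {Γ : MatC a →ₗ[ℂ] MatC b}
    (h1 : HermPreserving Θ) (h2 : HermPreserving Γ) : HermPreserving (Θ ∘ₗ Γ) := by
  intro X
  rw [LinearMap.comp_apply, LinearMap.comp_apply, h2, h1]

lemma choi_isHermitian {a b : ℕ} {Θ : MatC a →ₗ[ℂ] MatC b} (h : HermPreserving Θ) :
    (choi Θ).IsHermitian := by
  refine Matrix.IsHermitian.ext fun ⟨k, i⟩ ⟨l, j⟩ => ?_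
  rw [choi_apply, choi_apply,
    show (Matrix.single l k 1 : MatC a) = (Matrix.single k l 1)ᴴ from
      (stdBasis_conjTranspose k l).symm, h, Matrix.conjTranspose_apply, star_star]

/-- Extensionality from values on the standard basis. -/
lemma ext_of_basis {a b : ℕ} {Θ Γ : MatC a →ₗ[ℂ] MatC b}
    (h : ∀ k l, Θ (Matrix.single k l 1) = Γ (Matrix.single k l 1)) : Θ = Γ := by
  refine LinearMap.ext fun M => ?_
  conv_lhs => rw [matrix_decomp M]
  conv_rhs => rw [matrix_decomp M]
  simp only [map_sum, _root_.map_smul, h]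

lemma tensId_adMap {a b : ℕ} (V : Matrix (Fin b) (Fin a) ℂ) (k : ℕ)
    (X : Matrix (Fin a × Fin k) (Fin a × Fin k) ℂ) :
    tensId (adMap V) k X
      = (V ⊗ₖ (1 : Matrix (Fin k) (Fin k) ℂ)) * X * (V ⊗ₖ (1 : Matrix (Fin k) (Fin k) ℂ))ᴴ := by
  ext ⟨p1, p2⟩ ⟨q1, q2⟩
  simp only [tensId, adMap_apply, Matrix.of_apply, Matrix.mul_apply,
    Matrix.conjTranspose_apply, Matrix.kroneckerMap_apply, Fintype.sum_prod_type,
    Matrix.one_apply, mul_ite, mul_one, mul_zero, ite_mul, zero_mul, one_mul,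
    Complex.star_def, _root_.map_mul, apply_ite (starRingEnd ℂ), _root_.map_one,
    _root_.map_zero, Finset.sum_ite_eq, Finset.sum_ite_eq', Finset.mem_univ, if_true]

lemma isCP_adMap {a b : ℕ} (V : Matrix (Fin b) (Fin a) ℂ) :
    IsCompletelyPositive (adMap V) := by
  intro k X hX
  rw [tensId_adMap]
  exact hX.mul_mul_conjTranspose_same _

lemma tensId_sum {a b : ℕ} {κ : Type*} (s : Finset κ) (F : κ → (MatC a →ₗ[ℂ] MatC b)) (k : ℕ)
    (X : Matrix (Fin a × Fin k) (Fin a × Fin k) ℂ) :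
    tensId (∑ r ∈ s, F r) k X = ∑ r ∈ s, tensId (F r) k X := by
  ext p q
  simp [tensId, Matrix.sum_apply, LinearMap.sum_apply]

lemma isCP_sum {a b : ℕ} {κ : Type*} (s : Finset κ) (F : κ → (MatC a →ₗ[ℂ] MatC b))
    (h : ∀ r ∈ s, IsCompletelyPositive (F r)) : IsCompletelyPositive (∑ r ∈ s, F r) := by
  intro k X hX
  rw [tensId_sum]
  exact Finset.sum_induction _ _ (fun A B hA hB => hA.add hB) Matrix.PosSemidef.zero
    (fun r hr => h r hr k X hX)
lemma choi_posSemidef_of_CP {a b : ℕ} {Θ : MatC a →ₗ[ℂ] MatC b}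
    (h : IsCompletelyPositive Θ) : (choi Θ).PosSemidef := by
  classical
  set ω : Fin a × Fin a → ℂ := fun p => if p.1 = p.2 then 1 else 0 with hω
  set Ω : Matrix (Fin a × Fin a) (Fin a × Fin a) ℂ :=
    Matrix.of fun p q => (starRingEnd ℂ) (ω p) * ω q with hΩdef
  have hΩ : Ω.PosSemidef := by
    have h2 := Matrix.posSemidef_conjTranspose_mul_self (Matrix.replicateRow Unit ω)
    have : (Matrix.replicateRow Unit ω)ᴴ * Matrix.replicateRow Unit ω = Ω := by
      ext p q
      simp [Matrix.mul_apply, Matrix.replicateRow, Matrix.conjTranspose_apply, Complex.star_def, hΩdef]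
    rwa [this] at h2
  have key := h a Ω hΩ
  have hEq : choi Θ = (tensId Θ a Ω).submatrix Prod.swap Prod.swap := by
    ext ⟨k, i⟩ ⟨l, j⟩
    rw [Matrix.submatrix_apply, choi_apply]
    have hstd : (Matrix.of fun a' b' => Ω (a', k) (b', l)) = Matrix.single k l (1:ℂ) := by
      refine Matrix.ext fun a' b' => ?_
      simp only [hΩdef, hω, Matrix.of_apply, Matrix.single]
      simp only [apply_ite (starRingEnd ℂ), _root_.map_one, _root_.map_zero, ite_mul, zero_mul,
        one_mul, mul_ite, mul_one, mul_zero, ite_and, eq_comm]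
      by_cases h1 : k = a' <;> by_cases h2 : l = b' <;> simp [h1, h2]
    show _ = (tensId Θ a Ω) (Prod.swap (k, i)) (Prod.swap (l, j))
    simp only [tensId, Prod.swap_prod_mk, Matrix.of_apply]
    rw [hstd]
  rw [hEq]
  exact key.submatrix _

lemma CP_of_choi_posSemidef {a b : ℕ} {Θ : MatC a →ₗ[ℂ] MatC b}
    (h : (choi Θ).PosSemidef) : IsCompletelyPositive Θ := by
  obtain ⟨B, hB⟩ : ∃ B, choi Θ = Bᴴ * B := by
    open scoped MatrixOrder in exact CStarAlgebra.nonneg_iff_eq_star_mul_self.mp h.nonneg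
  have hΘ : Θ = ∑ r : Fin a × Fin b, adMap (Matrix.of fun i k => star (B r (k, i))) := by
    apply ext_of_basis; intro k l
    ext i j
    have hJ : Θ (Matrix.single k l 1) i j = (Bᴴ * B) (k, i) (l, j) := by
      rw [← choi_apply, hB]
    rw [hJ]
    simp only [LinearMap.sum_apply, Matrix.sum_apply, adMap_apply, Matrix.mul_apply,
      Matrix.conjTranspose_apply, Matrix.of_apply, Matrix.single, ite_mul, zero_mul,
      mul_ite, mul_zero, ite_and, Finset.sum_ite_eq, Finset.sum_ite_eq', Finset.mem_univ,
      if_true, Complex.star_def, _root_.map_mul, Complex.conj_conj, Fintype.sum_prod_type]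
    simp [mul_one]
  rw [hΘ]
  exact isCP_sum _ _ fun r _ => isCP_adMap _

lemma sMap_eq_quad {d : ℕ} (Θ : MatC d →ₗ[ℂ] MatC d) :
    sMap Θ = dotProduct (star (fun p : Fin d × Fin d => if p.1 = p.2 then (1:ℂ) else 0))
      ((choi Θ).mulVec (fun p : Fin d × Fin d => if p.1 = p.2 then (1:ℂ) else 0)) := by
  simp only [dotProduct, Matrix.mulVec, Pi.star_apply, Complex.star_def,
    Fintype.sum_prod_type, choi_apply, apply_ite (starRingEnd ℂ), _root_.map_one,
    _root_.map_zero, mul_ite, mul_one, mul_zero, ite_mul, zero_mul,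
    Finset.sum_ite_eq, Finset.sum_ite_eq', Finset.mem_univ, if_true, sMap, one_mul]
section Top

variable {a b : ℕ}

private def coeAddHom (a b : ℕ) : (MatC a →ₗ[ℂ] MatC b) →+ (MatC a → MatC b) where
  toFun Φ := ⇑Φ
  map_zero' := rfl
  map_add' _ _ := rfl

instance : IsTopologicalAddGroup (MatC a →ₗ[ℂ] MatC b) :=
  Topology.IsInducing.topologicalAddGroup (coeAddHom a b) ⟨rfl⟩

instance : ContinuousSMul ℝ (MatC a →ₗ[ℂ] MatC b) :=
  Topology.IsInducing.continuousSMul (M := ℝ)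
    (g := fun Φ : MatC a →ₗ[ℂ] MatC b => ⇑Φ) (f := id) ⟨rfl⟩ continuous_id rfl

instance : T2Space (MatC a →ₗ[ℂ] MatC b) :=
  Topology.IsEmbedding.t2Space
    (f := fun Φ : MatC a →ₗ[ℂ] MatC b => ⇑Φ) ⟨⟨rfl⟩, DFunLike.coe_injective⟩

/-- The elementary map `M ↦ M k l • f_ij`. -/
noncomputable def elemMap (k l : Fin a) (i j : Fin b) : MatC a →ₗ[ℂ] MatC b where
  toFun M := M k l • Matrix.single i j 1
  map_add' M N := by simp [Matrix.add_apply, add_smul]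
  map_smul' c M := by simp [Matrix.smul_apply, smul_smul]

/-- Real coordinates of a map. -/
noncomputable def coordFun (Φ : MatC a →ₗ[ℂ] MatC b) :
    EuclideanSpace ℝ (((Fin a × Fin a) × (Fin b × Fin b)) × Fin 2) := WithLp.toLp 2 fun x : (((Fin a × Fin a) × (Fin b × Fin b)) × Fin 2) =>
  if x.2 = 0 then (Φ (Matrix.single x.1.1.1 x.1.1.2 1) x.1.2.1 x.1.2.2).re
  else (Φ (Matrix.single x.1.1.1 x.1.1.2 1) x.1.2.1 x.1.2.2).im

noncomputable def coordInv (y : EuclideanSpace ℝ (((Fin a × Fin a) × (Fin b × Fin b)) × Fin 2)) :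
    MatC a →ₗ[ℂ] MatC b :=
  ∑ k : Fin a, ∑ l : Fin a, ∑ i : Fin b, ∑ j : Fin b,
    (((y (((k, l), (i, j)), 0) : ℝ) : ℂ) + ((y (((k, l), (i, j)), 1) : ℝ) : ℂ) * Complex.I) •
      elemMap k l i j

lemma coordInv_apply (y : EuclideanSpace ℝ (((Fin a × Fin a) × (Fin b × Fin b)) × Fin 2))
    (k l : Fin a) (i j : Fin b) :
    coordInv y (Matrix.single k l 1) i j
      = ((y (((k, l), (i, j)), 0) : ℝ) : ℂ) + ((y (((k, l), (i, j)), 1) : ℝ) : ℂ) * Complex.I := by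
  simp only [coordInv, LinearMap.sum_apply, LinearMap.smul_apply, elemMap, LinearMap.coe_mk,
    AddHom.coe_mk, Matrix.sum_apply, Matrix.smul_apply, Matrix.single, Matrix.of_apply,
    smul_eq_mul, ite_and]
  simp only [mul_ite, mul_one, mul_zero, ite_mul, zero_mul, Finset.sum_ite_eq,
    Finset.sum_ite_eq', Finset.mem_univ, if_true]
  simp

/-- The coordinate `ℝ`-linear equivalence. -/
noncomputable def Tmap (a b : ℕ) : (MatC a →ₗ[ℂ] MatC b) ≃ₗ[ℝ]
    EuclideanSpace ℝ (((Fin a × Fin a) × (Fin b × Fin b)) × Fin 2) where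
  toFun := coordFun
  invFun := coordInv
  map_add' Φ Ψ := by
    ext x
    rcases x with ⟨⟨⟨k, l⟩, ⟨i, j⟩⟩, t⟩
    fin_cases t <;>
      simp [coordFun, LinearMap.add_apply, Matrix.add_apply]
  map_smul' c Φ := by
    ext x
    rcases x with ⟨⟨⟨k, l⟩, ⟨i, j⟩⟩, t⟩
    fin_cases t <;>
      simp [coordFun, LinearMap.smul_apply, Matrix.smul_apply, Complex.real_smul]
  left_inv Φ := by
    apply ext_of_basis
    intro k l
    ext i j
    rw [coordInv_apply]
    simp [coordFun, Complex.re_add_im]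
  right_inv y := by
    ext x
    rcases x with ⟨⟨⟨k, l⟩, ⟨i, j⟩⟩, t⟩
    fin_cases t <;> simp [coordFun, coordInv_apply]

end Top
section Sep

variable {a b : ℕ}

lemma mapInner_conj (Ψ Φ : MatC a →ₗ[ℂ] MatC b) :
    mapInner Ψ Φ = (starRingEnd ℂ) (mapInner Φ Ψ) := by
  simp only [mapInner, map_sum]
  exact Finset.sum_congr rfl fun k _ => Finset.sum_congr rfl fun l _ => hsInner_conj _ _

lemma Tmap_apply (Φ : MatC a →ₗ[ℂ] MatC b) (x) : Tmap a b Φ x = coordFun Φ x := rfl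

lemma inner_Tmap (Ψ Φ : MatC a →ₗ[ℂ] MatC b) :
    inner ℝ (Tmap a b Ψ) (Tmap a b Φ) = (mapInner Ψ Φ).re := by
  rw [PiLp.inner_apply]
  simp only [RCLike.inner_apply, starRingEnd_apply, star_trivial, Fintype.sum_prod_type,
    Fin.sum_univ_two]
  rw [mapInner, Complex.re_sum]
  refine Finset.sum_congr rfl fun k _ => ?_
  rw [Complex.re_sum]
  refine Finset.sum_congr rfl fun l _ => ?_
  rw [hsInner_eq_sum, Complex.re_sum]
  refine Finset.sum_congr rfl fun i _ => ?_
  rw [Complex.re_sum]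
  refine Finset.sum_congr rfl fun j _ => ?_
  simp only [Tmap_apply, coordFun, WithLp.ofLp_toLp]
  norm_num [Complex.mul_re, Complex.conj_re, Complex.conj_im]
  ring

lemma mapInner_add_left (Ψ Ψ' Φ : MatC a →ₗ[ℂ] MatC b) :
    mapInner (Ψ + Ψ') Φ = mapInner Ψ Φ + mapInner Ψ' Φ := by
  simp only [mapInner, LinearMap.add_apply, hsInner_eq_sum, Matrix.add_apply, add_mul,
    Finset.sum_add_distrib]

lemma mapInner_smul_left (c : ℂ) (Ψ Φ : MatC a →ₗ[ℂ] MatC b) :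
    mapInner (c • Ψ) Φ = c * mapInner Ψ Φ := by
  simp only [mapInner, LinearMap.smul_apply, hsInner_eq_sum, Matrix.smul_apply, smul_eq_mul,
    Finset.mul_sum, mul_assoc]

/-- The conjugate map `X ↦ Φ(Xᴴ)ᴴ`. -/
noncomputable def conjMap (Ψ : MatC a →ₗ[ℂ] MatC b) : MatC a →ₗ[ℂ] MatC b where
  toFun X := (Ψ Xᴴ)ᴴ
  map_add' X Y := by simp [Matrix.conjTranspose_add]
  map_smul' c X := by
    simp [Matrix.conjTranspose_smul, _root_.map_smul]

lemma conjMap_apply (Ψ : MatC a →ₗ[ℂ] MatC b) (X : MatC a) : conjMap Ψ X = (Ψ Xᴴ)ᴴ := rfl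

/-- Hermitian part of a map. -/
noncomputable def hermPart (Ψ : MatC a →ₗ[ℂ] MatC b) : MatC a →ₗ[ℂ] MatC b :=
  (1/2 : ℂ) • (Ψ + conjMap Ψ)

lemma hermPreserving_hermPart (Ψ : MatC a →ₗ[ℂ] MatC b) : HermPreserving (hermPart Ψ) := by
  intro X
  simp only [hermPart, LinearMap.smul_apply, LinearMap.add_apply, conjMap_apply,
    Matrix.conjTranspose_conjTranspose, Matrix.conjTranspose_smul, Matrix.conjTranspose_add,
    Complex.star_def, map_div₀, _root_.map_one, map_ofNat]
  rw [add_comm]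

lemma mapInner_conjMap {Ψ Γ : MatC a →ₗ[ℂ] MatC b} (hΓ : HermPreserving Γ) :
    mapInner (conjMap Ψ) Γ = (starRingEnd ℂ) (mapInner Ψ Γ) := by
  have hterm : ∀ k l : Fin a,
      hsInner (conjMap Ψ (Matrix.single k l 1)) (Γ (Matrix.single k l 1))
        = (starRingEnd ℂ)
          (hsInner (Ψ (Matrix.single l k 1)) (Γ (Matrix.single l k 1))) := by
    intro k l
    rw [conjMap_apply, stdBasis_conjTranspose, hsInner_conjTranspose, ← hΓ,
      stdBasis_conjTranspose]
  simp only [mapInner, map_sum, hterm]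
  exact Finset.sum_comm

lemma mapInner_hermPart {Ψ Γ : MatC a →ₗ[ℂ] MatC b} (hΓ : HermPreserving Γ) :
    mapInner (hermPart Ψ) Γ = (((mapInner Ψ Γ).re : ℝ) : ℂ) := by
  rw [hermPart, mapInner_smul_left, mapInner_add_left, mapInner_conjMap hΓ,
    Complex.add_conj]
  push_cast
  ring

/-- Separation: if `Φ ∉ C` then some Hermiticity preserving `Ψ` separates. -/
lemma exists_separating {C : Set (MatC a →ₗ[ℂ] MatC b)} (hne : C.Nonempty)
    (hclosed : IsClosed C)
    (hadd : ∀ Φ ∈ C, ∀ Ψ ∈ C, Φ + Ψ ∈ C)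
    (hsmul : ∀ Φ ∈ C, ∀ c : ℝ, 0 ≤ c → (c : ℂ) • Φ ∈ C)
    (hpos : ∀ Γ ∈ C, IsPosMap Γ)
    {Φ : MatC a →ₗ[ℂ] MatC b} (hΦ : HermPreserving Φ) (hnot : Φ ∉ C) :
    ∃ Ψ ∈ dualCone C, ¬ (0 ≤ mapInner Ψ Φ) := by
  classical
  have h0C : (0 : MatC a →ₗ[ℂ] MatC b) ∈ C := by
    obtain ⟨Γ, hΓ⟩ := hne
    have := hsmul Γ hΓ 0 le_rfl
    simpa using this
  set T := Tmap a b
  have hTsmul : ∀ (c : ℝ) (Γ : MatC a →ₗ[ℂ] MatC b), (c : ℂ) • Γ = c • Γ := by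
    intro c Γ
    rw [show ((c : ℂ)) = algebraMap ℝ ℂ c from rfl, algebraMap_smul]
  let K : ConvexCone ℝ (EuclideanSpace ℝ (((Fin a × Fin a) × (Fin b × Fin b)) × Fin 2)) :=
    { carrier := T '' C
      smul_mem' := by
        rintro c hc x ⟨Γ, hΓ, rfl⟩
        exact ⟨(c : ℂ) • Γ, hsmul Γ hΓ c hc.le, by rw [hTsmul, _root_.map_smul]⟩
      add_mem' := by
        rintro x ⟨Γ, hΓ, rfl⟩ y ⟨Γ', hΓ', rfl⟩
        exact ⟨Γ + Γ', hadd Γ hΓ Γ' hΓ', by rw [map_add]⟩ }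
  have hKne : (K : Set (EuclideanSpace ℝ (((Fin a × Fin a) × (Fin b × Fin b)) × Fin 2))).Nonempty :=
    ⟨T 0, ⟨0, h0C, rfl⟩⟩
  have hKclosed : IsClosed
      (K : Set (EuclideanSpace ℝ (((Fin a × Fin a) × (Fin b × Fin b)) × Fin 2))) := by
    have himg : (K : Set (EuclideanSpace ℝ (((Fin a × Fin a) × (Fin b × Fin b)) × Fin 2)))
        = T.symm ⁻¹' C := by
      ext x
      constructor
      · rintro ⟨Γ, hΓ, rfl⟩; simpa using hΓ
      · intro hx; exact ⟨T.symm x, hx, by simp⟩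
    rw [himg]
    have hcont : Continuous (T.symm : EuclideanSpace ℝ _ → (MatC a →ₗ[ℂ] MatC b)) :=
      LinearMap.continuous_of_finiteDimensional T.symm.toLinearMap
    exact hclosed.preimage hcont
  have hdisj : T Φ ∉ K := by
    rintro ⟨Γ, hΓ, hEq⟩
    exact hnot (T.injective hEq ▸ hΓ)
  obtain ⟨y, hy1, hy2⟩ :=
    ProperCone.hyperplane_separation' (x₀ := T Φ)
      ({ carrier := (K : Set (EuclideanSpace ℝ (((Fin a × Fin a) × (Fin b × Fin b)) × Fin 2)))
         add_mem' := fun hx hy => K.add_mem hx hy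
         zero_mem' := ⟨0, h0C, by simp⟩
         smul_mem' := by
           rintro c x ⟨Γ, hΓ, rfl⟩
           exact ⟨((c : ℝ) : ℂ) • Γ, hsmul Γ hΓ c c.2, by rw [hTsmul, _root_.map_smul]; rfl⟩
         isClosed' := hKclosed } : ProperCone ℝ (EuclideanSpace ℝ (((Fin a × Fin a) × (Fin b × Fin b)) × Fin 2)))
      hdisj
  rw [real_inner_comm] at hy2
  refine ⟨hermPart (T.symm y), ⟨hermPreserving_hermPart _, ?_⟩, ?_⟩
  · intro Γ hΓ
    rw [mapInner_hermPart (posMap_hermPreserving (hpos Γ hΓ))]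
    have := hy1 (T Γ) ⟨Γ, hΓ, rfl⟩
    rw [← T.apply_symm_apply y, inner_Tmap] at this
    rw [show (mapInner (T.symm y) Γ).re = (mapInner Γ (T.symm y)).re from by
      rw [mapInner_conj]; exact Complex.conj_re _]
    exact Complex.zero_le_real.mpr this
  · rw [mapInner_hermPart hΦ]
    have : inner ℝ (T (T.symm y)) (T Φ) = (mapInner (T.symm y) Φ).re := inner_Tmap _ _
    rw [T.apply_symm_apply] at this
    rw [this] at hy2
    intro hcon
    exact absurd (Complex.zero_le_real.mp hcon) (not_le.mpr hy2)

end Sep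
section Main

lemma isCP_id {d : ℕ} : IsCompletelyPositive (LinearMap.id : MatC d →ₗ[ℂ] MatC d) := by
  intro k X hX
  have h : tensId LinearMap.id k X = X := by
    ext ⟨p1, p2⟩ ⟨q1, q2⟩
    simp [tensId]
  rwa [h]

lemma conj_of_nonneg {z : ℂ} (h : 0 ≤ z) : (starRingEnd ℂ) z = z := by
  rw [Complex.conj_eq_iff_im]
  exact ((Complex.le_def.mp h).2).symm

lemma sMap_nonneg_of_CP {d : ℕ} {Θ : MatC d →ₗ[ℂ] MatC d} (h : IsCompletelyPositive Θ) :
    0 ≤ sMap Θ := by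
  rw [sMap_eq_quad]
  exact (choi_posSemidef_of_CP h).dotProduct_mulVec_nonneg _

lemma key1 {m n : ℕ} (Φ Ψ : MatC m →ₗ[ℂ] MatC n) (X : Matrix (Fin m) (Fin m) ℂ) :
    (starRingEnd ℂ) (sMap (adMap Xᴴ ∘ₗ (adjointMap Ψ ∘ₗ Φ))) = mapInner Ψ (Φ ∘ₗ adMap Xᴴ) := by
  rw [← sMap_adjoint, adjointMap_comp, adjointMap_comp, adjointMap_adMap, adjoint_adjoint,
    Matrix.conjTranspose_conjTranspose, mapInner_eq_sMap, adjointMap_comp, adjointMap_adMap,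
    Matrix.conjTranspose_conjTranspose, sMap_comm, LinearMap.comp_assoc]

lemma key2 {m n : ℕ} (Φ Ψ : MatC m →ₗ[ℂ] MatC n) (X : Matrix (Fin n) (Fin n) ℂ) :
    (starRingEnd ℂ) (sMap (adMap Xᴴ ∘ₗ (Φ ∘ₗ adjointMap Ψ))) = mapInner Ψ (adMap Xᴴ ∘ₗ Φ) := by
  rw [← sMap_adjoint, adjointMap_comp, adjointMap_comp, adjointMap_adMap, adjoint_adjoint,
    Matrix.conjTranspose_conjTranspose, mapInner_eq_sMap, adjointMap_comp, adjointMap_adMap,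
    Matrix.conjTranspose_conjTranspose, LinearMap.comp_assoc, sMap_comm]

lemma mapInner_eq_conj_sMap1 {m n : ℕ} (Ψ Φ : MatC m →ₗ[ℂ] MatC n) :
    mapInner Ψ Φ = (starRingEnd ℂ) (sMap (adjointMap Ψ ∘ₗ Φ)) := by
  rw [mapInner_eq_sMap, ← sMap_adjoint, adjointMap_comp, adjoint_adjoint]

lemma mapInner_eq_conj_sMap2 {m n : ℕ} (Ψ Φ : MatC m →ₗ[ℂ] MatC n) :
    mapInner Ψ Φ = (starRingEnd ℂ) (sMap (Φ ∘ₗ adjointMap Ψ)) := by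
  rw [mapInner_eq_sMap, sMap_comm, ← sMap_adjoint, adjointMap_comp, adjoint_adjoint]

end Main

/-- Main theorem: for an mcs-cone `C` and Hermiticity-preserving `Φ`,
`Φ ∈ C` iff `Ψ*∘Φ` is CP for all `Ψ ∈ C°`, iff `Φ∘Ψ*` is CP for all `Ψ ∈ C°`. -/
theorem stmt11 {m n : ℕ} (C : Set (MatC m →ₗ[ℂ] MatC n)) (hC : IsMcsCone C)
    (Φ : MatC m →ₗ[ℂ] MatC n) (hΦ : HermPreserving Φ) :
    (Φ ∈ C ↔ ∀ Ψ ∈ dualCone C, IsCompletelyPositive (adjointMap Ψ ∘ₗ Φ)) ∧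
    (Φ ∈ C ↔ ∀ Ψ ∈ dualCone C, IsCompletelyPositive (Φ ∘ₗ adjointMap Ψ)) := by
  obtain ⟨hne, hclosed, hadd, hsmul, hpos, hcomp⟩ := hC
  have hne' : C.Nonempty := ⟨hne.choose, hne.choose_spec.1⟩
  constructor
  · constructor
    · intro hΦC Ψ hΨ
      refine CP_of_choi_posSemidef
        (Matrix.PosSemidef.of_dotProduct_mulVec_nonneg (choi_isHermitian (hermPreserving_comp (hermPreserving_adjoint hΨ.1) hΦ)) fun x => ?_)
      rw [quad_choi]
      set X : Matrix (Fin m) (Fin m) ℂ := Matrix.of fun i k => x (k, i) with hXdef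
      have hmem : Φ ∘ₗ adMap Xᴴ ∈ C := by
        have := hcomp Φ hΦC LinearMap.id isCP_id (adMap Xᴴ) (isCP_adMap _)
        rwa [LinearMap.id_comp] at this
      have hw := hΨ.2 _ hmem
      have hs : sMap (adMap Xᴴ ∘ₗ (adjointMap Ψ ∘ₗ Φ)) = mapInner Ψ (Φ ∘ₗ adMap Xᴴ) := by
        rw [← Complex.conj_conj (sMap (adMap Xᴴ ∘ₗ (adjointMap Ψ ∘ₗ Φ))), key1,
          conj_of_nonneg hw]
      rw [hs]
      exact hw
    · intro h
      by_contra hnot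
      obtain ⟨Ψ, hΨd, hneg⟩ := exists_separating hne' hclosed hadd hsmul hpos hΦ hnot
      apply hneg
      rw [mapInner_eq_conj_sMap1]
      have h0 : 0 ≤ sMap (adjointMap Ψ ∘ₗ Φ) := sMap_nonneg_of_CP (h Ψ hΨd)
      rw [conj_of_nonneg h0]
      exact h0
  · constructor
    · intro hΦC Ψ hΨ
      refine CP_of_choi_posSemidef
        (Matrix.PosSemidef.of_dotProduct_mulVec_nonneg (choi_isHermitian (hermPreserving_comp hΦ (hermPreserving_adjoint hΨ.1))) fun x => ?_)
      rw [quad_choi]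
      set X : Matrix (Fin n) (Fin n) ℂ := Matrix.of fun i k => x (k, i) with hXdef
      have hmem : adMap Xᴴ ∘ₗ Φ ∈ C := by
        have := hcomp Φ hΦC (adMap Xᴴ) (isCP_adMap _) LinearMap.id isCP_id
        rwa [LinearMap.comp_id] at this
      have hw := hΨ.2 _ hmem
      have hs : sMap (adMap Xᴴ ∘ₗ (Φ ∘ₗ adjointMap Ψ)) = mapInner Ψ (adMap Xᴴ ∘ₗ Φ) := by
        rw [← Complex.conj_conj (sMap (adMap Xᴴ ∘ₗ (Φ ∘ₗ adjointMap Ψ))), key2,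
          conj_of_nonneg hw]
      rw [hs]
      exact hw
    · intro h
      by_contra hnot
      obtain ⟨Ψ, hΨd, hneg⟩ := exists_separating hne' hclosed hadd hsmul hpos hΦ hnot
      apply hneg
      rw [mapInner_eq_conj_sMap2]
      have h0 : 0 ≤ sMap (Φ ∘ₗ adjointMap Ψ) := sMap_nonneg_of_CP (h Ψ hΨd)
      rw [conj_of_nonneg h0]
      exact h0
end

section
/- A Hermiticity-preserving map Φ : B(K) → B(H) is k-positive if and only if Ad_E∘Φ is completely positive for every rank-k orthogonal projection E on H. -/
open Matrix BigOperators ComplexOrder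
open scoped Kronecker ComplexConjugate

section Aux
open Module

lemma quad_conj {α β : Type*} [Fintype α] [Fintype β] (A : Matrix α β ℂ) (M : Matrix α α ℂ)
    (x : β → ℂ) :
    star x ⬝ᵥ ((Aᴴ * M * A) *ᵥ x) = star (A *ᵥ x) ⬝ᵥ (M *ᵥ (A *ᵥ x)) := by
  simp only [star_mulVec, dotProduct_mulVec, vecMul_vecMul, Matrix.mul_assoc]

lemma kron_conjT {a b : ℕ} (A : MatC a) (B : MatC b) : (A ⊗ₖ B)ᴴ = Aᴴ ⊗ₖ Bᴴ := by
  ext ⟨p₁, p₂⟩ ⟨q₁, q₂⟩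
  simp [Matrix.conjTranspose_apply, Matrix.kroneckerMap_apply, mul_comm]

lemma hermPreserving_comp_s14 {a b : ℕ} (Φ : MatC a →ₗ[ℂ] MatC b) (hΦ : HermPreserving Φ)
    (E : MatC b) (hE : E.IsHermitian) : HermPreserving (adMap E ∘ₗ Φ) := by
  intro X
  simp only [LinearMap.comp_apply, adMap, LinearMap.coe_mk, AddHom.coe_mk, hΦ X]
  rw [Matrix.conjTranspose_mul, Matrix.conjTranspose_mul, Matrix.conjTranspose_conjTranspose,
    hE.eq, Matrix.mul_assoc]

lemma tensId_isHermitian {a b j : ℕ} (Φ : MatC a →ₗ[ℂ] MatC b) (hΦ : HermPreserving Φ)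
    (X : Matrix (Fin a × Fin j) (Fin a × Fin j) ℂ) (hX : X.IsHermitian) :
    (tensId Φ j X).IsHermitian := by
  ext ⟨p₁, p₂⟩ ⟨q₁, q₂⟩
  have hslice : (Matrix.of fun i j' => X (i, q₂) (j', p₂)) =
      (Matrix.of fun i j' => X (i, p₂) (j', q₂))ᴴ := by
    ext i j'
    simpa using congrFun (congrFun hX.symm (i, q₂)) (j', p₂)
  simp only [Matrix.conjTranspose_apply, tensId, Matrix.of_apply]
  rw [hslice, hΦ]
  simp


lemma tensId_adMap_eq {a b j : ℕ} (Φ : MatC a →ₗ[ℂ] MatC b) (E : MatC b)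
    (X : Matrix (Fin a × Fin j) (Fin a × Fin j) ℂ) :
    tensId (adMap E ∘ₗ Φ) j X =
      (E ⊗ₖ (1 : MatC j)) * tensId Φ j X * (E ⊗ₖ (1 : MatC j))ᴴ := by
  ext ⟨p₁, p₂⟩ ⟨q₁, q₂⟩
  simp only [tensId, adMap, LinearMap.comp_apply, LinearMap.coe_mk, AddHom.coe_mk,
    Matrix.of_apply, Matrix.mul_apply, Matrix.conjTranspose_apply, Matrix.kroneckerMap_apply,
    Fintype.sum_prod_type, Matrix.one_apply]
  simp [Finset.mul_sum, Finset.sum_mul, mul_ite, ite_mul, apply_ite (starRingEnd ℂ),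
    Finset.sum_ite_eq, Finset.sum_ite_eq', mul_comm, mul_assoc, mul_left_comm]


lemma tensId_conj_right {a b jj kk : ℕ} (Φ : MatC a →ₗ[ℂ] MatC b)
    (X : Matrix (Fin a × Fin jj) (Fin a × Fin jj) ℂ) (W : Matrix (Fin jj) (Fin kk) ℂ) :
    tensId Φ kk (((1 : MatC a) ⊗ₖ W)ᴴ * X * ((1 : MatC a) ⊗ₖ W)) =
      ((1 : MatC b) ⊗ₖ W)ᴴ * tensId Φ jj X * ((1 : MatC b) ⊗ₖ W) := by
  ext ⟨s, α⟩ ⟨t, β⟩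
  have hC : (Matrix.of fun i j' =>
      ((((1 : MatC a) ⊗ₖ W)ᴴ * X * ((1 : MatC a) ⊗ₖ W)) (i, α) (j', β))) =
      ∑ p : Fin jj, ∑ q : Fin jj,
        ((starRingEnd ℂ) (W p α) * W q β) • Matrix.of (fun i j' => X (i, p) (j', q)) := by
    ext i j'
    simp only [Matrix.of_apply, Matrix.mul_apply, Matrix.conjTranspose_apply,
      Matrix.kroneckerMap_apply, Fintype.sum_prod_type, Matrix.one_apply, Matrix.sum_apply,
      Matrix.smul_apply, smul_eq_mul]
    simp [Finset.mul_sum, Finset.sum_mul, mul_ite, ite_mul, apply_ite (starRingEnd ℂ),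
      Finset.sum_ite_eq, Finset.sum_ite_eq', mul_comm, mul_assoc, mul_left_comm]
    rw [Finset.sum_comm]
  simp only [tensId, Matrix.of_apply]
  rw [hC]
  rw [map_sum]
  simp only [map_sum, LinearMap.map_smul, Matrix.sum_apply, Matrix.smul_apply, smul_eq_mul]
  simp only [Matrix.mul_apply, Matrix.conjTranspose_apply, Matrix.kroneckerMap_apply,
    Fintype.sum_prod_type, Matrix.one_apply, tensId, Matrix.of_apply]
  simp [Finset.mul_sum, Finset.sum_mul, mul_ite, ite_mul, apply_ite (starRingEnd ℂ),
    Finset.sum_ite_eq, Finset.sum_ite_eq', mul_comm, mul_assoc, mul_left_comm]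
  rw [Finset.sum_comm]


lemma piLp_sum_apply {n : ℕ} {ι : Type*} (s : Finset ι) (f : ι → EuclideanSpace ℂ (Fin n))
    (t : Fin n) : (∑ i ∈ s, f i) t = ∑ i ∈ s, f i t := by
  induction s using Finset.cons_induction with
  | empty => rfl
  | cons a s ha ih => rw [Finset.sum_cons, Finset.sum_cons, ← ih]; rfl

lemma exists_isometry {n k : ℕ} (hk : k ≤ n) (S : Submodule ℂ (EuclideanSpace ℂ (Fin n)))
    (hS : Module.finrank ℂ S ≤ k) :
    ∃ V : Matrix (Fin n) (Fin k) ℂ, Vᴴ * V = 1 ∧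
      (∀ x : EuclideanSpace ℂ (Fin n), x ∈ S → (V * Vᴴ) *ᵥ x = x) ∧
      (k ≤ Module.finrank ℂ S → ∀ i : Fin k, WithLp.toLp 2 (fun s => V s i) ∈ S) := by
  classical
  set d := Module.finrank ℂ S with hd
  have c : OrthonormalBasis (Fin d) ℂ S := stdOrthonormalBasis ℂ S
  set v : Fin n → EuclideanSpace ℂ (Fin n) :=
    fun i => if h : (i : ℕ) < d then (c ⟨i, h⟩ : EuclideanSpace ℂ (Fin n)) else 0 with hv
  set sset : Set (Fin n) := {i | (i : ℕ) < d} with hsset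
  have hco : Orthonormal ℂ (fun i : Fin d => (c i : EuclideanSpace ℂ (Fin n))) := by
    rw [orthonormal_iff_ite]
    intro i j'
    have := orthonormal_iff_ite.mp c.orthonormal i j'
    rwa [Submodule.coe_inner] at this
  have hrestrict : Orthonormal ℂ (sset.restrict v) := by
    have he : sset.restrict v = (fun i : Fin d => (c i : EuclideanSpace ℂ (Fin n))) ∘
        (fun i : sset => (⟨(i : Fin n), i.2⟩ : Fin d)) := by
      funext i
      simp only [Set.restrict_apply, Function.comp_apply, hv]
      exact dif_pos i.2
    rw [he]
    refine hco.comp _ fun x y hxy => ?_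
    have hval := congrArg Fin.val hxy
    exact Subtype.ext (Fin.ext hval)
  have hcard : Module.finrank ℂ (EuclideanSpace ℂ (Fin n)) = Fintype.card (Fin n) := by
    simp [finrank_euclideanSpace]
  obtain ⟨b, hb⟩ := hrestrict.exists_orthonormalBasis_extension_of_card_eq hcard
  refine ⟨Matrix.of fun s i => b (Fin.castLE hk i) s, ?_, ?_, ?_⟩
  · ext i i'
    have := orthonormal_iff_ite.mp b.orthonormal (Fin.castLE hk i) (Fin.castLE hk i')
    rw [PiLp.inner_apply] at this
    simp only [RCLike.inner_apply] at this
    simp only [Matrix.mul_apply, Matrix.conjTranspose_apply, Matrix.of_apply, Matrix.one_apply,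
      RCLike.star_def, Fin.castLE_inj] at this ⊢
    rw [← this]; exact Finset.sum_congr rfl fun _ _ => mul_comm _ _
  · intro x hx
    -- coefficients vanish for indices ≥ d
    have hcoef : ∀ t : Fin n, ¬ ((t : ℕ) < d) → (inner ℂ (b t) x : ℂ) = 0 := by
      intro t ht
      have hxr : (∑ j' : Fin d, c.repr ⟨x, hx⟩ j' • (c j' : EuclideanSpace ℂ (Fin n))) = x := by
        have := c.sum_repr ⟨x, hx⟩
        calc (∑ j' : Fin d, c.repr ⟨x, hx⟩ j' • (c j' : EuclideanSpace ℂ (Fin n)))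
            = ((∑ j' : Fin d, c.repr ⟨x, hx⟩ j' • c j' : S) : EuclideanSpace ℂ (Fin n)) := by
              push_cast
              rfl
          _ = x := by rw [this]
      rw [← hxr, inner_sum]
      refine Finset.sum_eq_zero fun j' _ => ?_
      rw [inner_smul_right]
      have hjn : (j' : ℕ) < n := lt_of_lt_of_le j'.2 (le_trans hS hk)
      set tj : Fin n := ⟨(j' : ℕ), hjn⟩ with htj
      have hj : tj ∈ sset := j'.2
      have hbj : b tj = (c j' : EuclideanSpace ℂ (Fin n)) := by
        rw [hb _ hj, hv]
        exact dif_pos j'.2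
      rw [← hbj]
      have hne : t ≠ tj := by
        intro hteq
        exact ht (by rw [hteq]; exact j'.2)
      have := orthonormal_iff_ite.mp b.orthonormal t tj
      rw [if_neg hne] at this
      rw [this, mul_zero]
    have hxrepr : ∀ s : Fin n, x s = ∑ t : Fin n, (inner ℂ (b t) x : ℂ) * b t s := by
      intro s
      conv_lhs => rw [← b.sum_repr x]
      rw [piLp_sum_apply]
      simp only [PiLp.smul_apply, smul_eq_mul, b.repr_apply_apply]
    funext s
    simp only [Matrix.mulVec, dotProduct, Matrix.mul_apply, Matrix.conjTranspose_apply,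
      Matrix.of_apply, RCLike.star_def]
    have lhs_eq : ∑ t : Fin n, (∑ i : Fin k, b (Fin.castLE hk i) s *
        (starRingEnd ℂ) (b (Fin.castLE hk i) t)) * x t
        = ∑ i : Fin k, (inner ℂ (b (Fin.castLE hk i)) x : ℂ) * b (Fin.castLE hk i) s := by
      simp only [Finset.sum_mul]
      rw [Finset.sum_comm]
      refine Finset.sum_congr rfl fun i _ => ?_
      rw [PiLp.inner_apply]
      simp only [RCLike.inner_apply, RCLike.star_def]
      rw [Finset.sum_mul]
      exact Finset.sum_congr rfl fun t _ => by ring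
    rw [lhs_eq, hxrepr s]
    have hmap : ∑ i : Fin k, (inner ℂ (b (Fin.castLE hk i)) x : ℂ) * b (Fin.castLE hk i) s
        = ∑ t ∈ Finset.univ.map (Fin.castLEEmb hk),
            (inner ℂ (b t) x : ℂ) * b t s := by
      rw [Finset.sum_map]
      rfl
    rw [hmap]
    refine Finset.sum_subset (Finset.subset_univ _) fun t _ htn => ?_
    have htk : ¬ ((t : ℕ) < k) := by
      intro hlt
      exact htn (Finset.mem_map.mpr ⟨⟨(t : ℕ), hlt⟩, Finset.mem_univ _, Fin.ext rfl⟩)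
    rw [hcoef t (fun hlt => htk (lt_of_lt_of_le hlt hS)), zero_mul]
  · intro hkd i
    have hid : ((Fin.castLE hk i : Fin n) : ℕ) < d := lt_of_lt_of_le i.2 hkd
    have hmem : (Fin.castLE hk i) ∈ sset := hid
    show b (Fin.castLE hk i) ∈ S
    rw [hb _ hmem]
    simp only [hv]
    rw [dif_pos hid]
    exact (c _).2


lemma proj_isometry {n k : ℕ} (hk : k ≤ n) (E : MatC n) (hE : E.IsHermitian)
    (hE2 : E * E = E) (hrk : E.rank = k) :
    ∃ V : Matrix (Fin n) (Fin k) ℂ, Vᴴ * V = 1 ∧ V * Vᴴ = E := by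
  classical
  set e := WithLp.linearEquiv 2 ℂ (Fin n → ℂ) with he
  set p : Submodule ℂ (Fin n → ℂ) := Submodule.span ℂ (Set.range E.col) with hp
  set S : Submodule ℂ (EuclideanSpace ℂ (Fin n)) := p.comap e.toLinearMap with hSdef
  have hfr : Module.finrank ℂ S = k := by
    rw [hSdef, Submodule.comap_equiv_eq_map_symm, LinearEquiv.finrank_map_eq, hp,
      ← Matrix.range_mulVecLin, ← Matrix.rank, hrk]
  obtain ⟨V, hV1, hVfix, hVcol⟩ := exists_isometry hk S hfr.le
  have hcol := hVcol hfr.ge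
  -- every vector of the form E *ᵥ x lies in S
  have hEmem : ∀ x : Fin n → ℂ, WithLp.toLp 2 (E *ᵥ x) ∈ S := by
    intro x
    rw [hSdef, Submodule.mem_comap]
    show E *ᵥ x ∈ p
    rw [hp, ← Matrix.range_mulVecLin]
    exact ⟨x, rfl⟩
  -- star u ⬝ᵥ w = 0 for u ∈ S and w ⊥ range E
  have hperp : ∀ x : Fin n → ℂ, Vᴴ *ᵥ (x - E *ᵥ x) = 0 := by
    intro x
    set w := x - E *ᵥ x with hw
    have hEw : E *ᵥ w = 0 := by
      rw [hw, Matrix.mulVec_sub, Matrix.mulVec_mulVec, hE2, sub_self]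
    have key : ∀ u : Fin n → ℂ, u ∈ p → star u ⬝ᵥ w = 0 := by
      intro u hu
      induction hu using Submodule.span_induction with
      | mem z hz =>
        obtain ⟨j', rfl⟩ := hz
        have : star (E.col j') ⬝ᵥ w = (Eᴴ *ᵥ w) j' := by
          simp [Matrix.col, Matrix.mulVec, dotProduct, Matrix.conjTranspose_apply,
            Matrix.transpose_apply]
        rw [this, hE.eq, hEw]
        rfl
      | zero => simp
      | add y z _ _ hy hz => rw [star_add, add_dotProduct, hy, hz, add_zero]
      | smul a y _ hy => rw [star_smul, smul_dotProduct, hy, smul_zero]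
    funext i
    have hcoli : WithLp.toLp 2 (fun s => V s i) ∈ S := hcol i
    rw [hSdef, Submodule.mem_comap] at hcoli
    have := key _ hcoli
    simpa [he, Matrix.mulVec, dotProduct, Matrix.conjTranspose_apply] using this
  have hvec : ∀ x : Fin n → ℂ, (V * Vᴴ) *ᵥ x = E *ᵥ x := by
    intro x
    have hdecomp : x = (E *ᵥ x) + (x - E *ᵥ x) := by ring_nf
    calc (V * Vᴴ) *ᵥ x = (V * Vᴴ) *ᵥ (E *ᵥ x) + (V * Vᴴ) *ᵥ (x - E *ᵥ x) := by
          rw [← Matrix.mulVec_add, ← hdecomp]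
      _ = E *ᵥ x := by
          rw [show (V * Vᴴ) *ᵥ (E *ᵥ x) = E *ᵥ x from hVfix _ (hEmem x), ← Matrix.mulVec_mulVec, hperp, Matrix.mulVec_zero, add_zero]
  refine ⟨V, hV1, ?_⟩
  ext s t
  have := congrFun (hvec (Pi.single t 1)) s
  simpa using this

end Aux

/-- `Φ` is `k`-positive iff `Ad_E∘Φ` is CP for every rank-`k` orthogonal projection `E`. -/
theorem stmt14 {m n k : ℕ} (hk : k ≤ n) (Φ : MatC m →ₗ[ℂ] MatC n)
    (hΦ : HermPreserving Φ) :
    IsKPositive Φ k ↔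
      ∀ E : MatC n, E.IsHermitian → E * E = E → E.rank = k →
        IsCompletelyPositive (adMap E ∘ₗ Φ) := by
  constructor
  · intro hpos E hE hE2 hrk j X hX
    obtain ⟨V, hV1, hV2⟩ := proj_isometry hk E hE hE2 hrk
    refine Matrix.PosSemidef.of_dotProduct_mulVec_nonneg
      (tensId_isHermitian _ (hermPreserving_comp_s14 Φ hΦ E hE) X hX.1) ?_
    intro y
    set M := tensId Φ j X with hM
    set A := E ⊗ₖ (1 : MatC j) with hA
    have hAH : Aᴴ = A := by rw [hA, kron_conjT, hE.eq, Matrix.conjTranspose_one]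
    have hAA : A * A = A := by rw [hA, ← Matrix.mul_kronecker_mul, hE2, Matrix.one_mul]
    rw [tensId_adMap_eq, ← hM, ← hA, hAH]
    rw [show A * M * A = Aᴴ * M * A by rw [hAH], quad_conj]
    set z := A *ᵥ y with hz
    have hzfix : A *ᵥ z = z := by rw [hz, Matrix.mulVec_mulVec, hAA]
    set W : Matrix (Fin j) (Fin k) ℂ :=
      Matrix.of (fun p i => ∑ s, (starRingEnd ℂ) (V s i) * z (s, p)) with hW
    set z' : Fin n × Fin k → ℂ := fun q => V q.1 q.2 with hz'
    have hWz : ((1 : MatC n) ⊗ₖ W) *ᵥ z' = z := by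
      funext ⟨s, p⟩
      have h1 : z (s, p) = ∑ t, E s t * z (t, p) := by
        conv_lhs => rw [← hzfix]
        simp [Matrix.mulVec, dotProduct, hA, Matrix.kroneckerMap_apply,
          Fintype.sum_prod_type, Matrix.one_apply, mul_ite, ite_mul,
          Finset.sum_ite_eq, Finset.sum_ite_eq']
      have h2 : (((1 : MatC n) ⊗ₖ W) *ᵥ z') (s, p) = ∑ t, E s t * z (t, p) := by
        have hEst : ∀ t, E s t = ∑ i : Fin k, V s i * (starRingEnd ℂ) (V t i) := by
          intro t
          rw [← hV2, Matrix.mul_apply]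
          exact Finset.sum_congr rfl fun i _ => by rw [Matrix.conjTranspose_apply]; rfl
        simp only [Matrix.mulVec, dotProduct, Matrix.kroneckerMap_apply,
          Fintype.sum_prod_type, Matrix.one_apply, hW, Matrix.of_apply, hz',
          ite_mul, one_mul, zero_mul]
        rw [Finset.sum_comm]
        simp only [Finset.sum_ite_eq, Finset.mem_univ, if_true]
        simp only [hEst, Finset.sum_mul]
        rw [Finset.sum_comm]
        refine Finset.sum_congr rfl fun i _ => ?_
        refine Finset.sum_congr rfl fun t _ => ?_
        ring
      rw [h2, ← h1]
    calc (0 : ℂ)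
        ≤ star z' ⬝ᵥ ((tensId Φ k (((1 : MatC m) ⊗ₖ W)ᴴ * X * ((1 : MatC m) ⊗ₖ W))) *ᵥ z') :=
          (hpos _ (hX.conjTranspose_mul_mul_same _)).dotProduct_mulVec_nonneg z'
      _ = star z' ⬝ᵥ (((((1 : MatC n) ⊗ₖ W))ᴴ * M * ((1 : MatC n) ⊗ₖ W)) *ᵥ z') := by
          rw [tensId_conj_right, hM]
      _ = star (((1 : MatC n) ⊗ₖ W) *ᵥ z') ⬝ᵥ (M *ᵥ (((1 : MatC n) ⊗ₖ W) *ᵥ z')) := by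
          rw [quad_conj]
      _ = star z ⬝ᵥ (M *ᵥ z) := by rw [hWz]
  · intro h X hX
    refine Matrix.PosSemidef.of_dotProduct_mulVec_nonneg (tensId_isHermitian _ hΦ X hX.1) ?_
    intro y
    set S : Submodule ℂ (EuclideanSpace ℂ (Fin n)) :=
      Submodule.span ℂ (Set.range fun p : Fin k => WithLp.toLp 2 (fun s => y (s, p)))
      with hS
    have hfr : Module.finrank ℂ S ≤ k := by
      simpa [Set.finrank] using finrank_range_le_card (R := ℂ)
        (fun p : Fin k => WithLp.toLp 2 (fun s => y (s, p)))
    obtain ⟨V, hV1, hVfix, -⟩ := exists_isometry hk S hfr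
    set E := V * Vᴴ with hE
    have hEh : E.IsHermitian := by
      rw [hE]
      exact Matrix.isHermitian_mul_conjTranspose_self V
    have hE2 : E * E = E := by
      rw [hE, Matrix.mul_assoc, ← Matrix.mul_assoc Vᴴ, hV1, Matrix.one_mul]
    have hrk : E.rank = k := by
      rw [hE, Matrix.rank_self_mul_conjTranspose, ← Matrix.rank_conjTranspose_mul_self, hV1,
        Matrix.rank_one, Fintype.card_fin]
    have hCP := h E hEh hE2 hrk k X hX
    have hfixy : (E ⊗ₖ (1 : MatC k)) *ᵥ y = y := by
      funext ⟨s, p⟩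
      have hcolp : WithLp.toLp 2 (fun t => y (t, p)) ∈ S :=
        Submodule.subset_span ⟨p, rfl⟩
      have hfix := congrFun (hVfix _ hcolp) s
      simp only [Matrix.mulVec, dotProduct, Matrix.kroneckerMap_apply,
        Fintype.sum_prod_type, Matrix.one_apply, mul_ite, ite_mul, mul_zero, zero_mul,
        mul_one, Finset.sum_ite_eq, Finset.mem_univ, if_true, ← hE]
      exact hfix
    have hAH : (E ⊗ₖ (1 : MatC k))ᴴ = E ⊗ₖ (1 : MatC k) := by
      rw [kron_conjT, hEh.eq, Matrix.conjTranspose_one]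
    have key : star y ⬝ᵥ (tensId Φ k X *ᵥ y)
        = star y ⬝ᵥ ((tensId (adMap E ∘ₗ Φ) k X) *ᵥ y) := by
      rw [tensId_adMap_eq, hAH]
      rw [show (E ⊗ₖ (1 : MatC k)) * tensId Φ k X * (E ⊗ₖ (1 : MatC k))
            = (E ⊗ₖ (1 : MatC k))ᴴ * tensId Φ k X * (E ⊗ₖ (1 : MatC k)) by rw [hAH]]
      rw [quad_conj, hfixy]
    rw [key]
    exact hCP.dotProduct_mulVec_nonneg y
end
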